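/- If G is a Frobenius group with Frobenius kernel N such that the index |G:N| is even, then N is abelian. -/
import Mathlib


/-- `N` is a Frobenius kernel of `G`: a proper nontrivial normal subgroup with a
complement acting fixed-point-freely by conjugation. -/
def IsFrobeniusKernel {G : Type*} [Group G] (N : Subgroup G) : Prop :=
  N.Normal ∧ N ≠ ⊥ ∧ N ≠ ⊤ ∧ ∃ H : Subgroup G, N.IsComplement' H ∧
    ∀ h ∈ H, h ≠ 1 → ∀ n ∈ N, h * n * h⁻¹ = n → n = 1

/-- If `G` is a finite Frobenius group with Frobenius kernel `N` of even index,
then `N` is abelian. -/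
theorem stmt18 (G : Type*) [Group G] [Finite G] (N : Subgroup G)
    (hN : IsFrobeniusKernel N) (heven : Even N.index) :
    ∀ x y : N, Commute x y := by
  obtain ⟨hNorm, -, -, H, hcomp, hfpf⟩ := hN
  -- H has even order, so contains an element of order 2
  have hcard : Nat.card H = N.index := (hcomp.symm.index_eq_card).symm
  have h2 : (2 : ℕ) ∣ Nat.card H := by
    rw [hcard]; exact heven.two_dvd
  haveI : Fact (Nat.Prime 2) := ⟨Nat.prime_two⟩
  obtain ⟨h, hh⟩ := exists_prime_orderOf_dvd_card' (G := H) 2 h2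
  have hh1 : (h : G) ≠ 1 := by
    intro hone
    have : h = 1 := Subtype.ext hone
    rw [this, orderOf_one] at hh; norm_num at hh
  have hhsq : (h : G) * (h : G) = 1 := by
    have : h * h = 1 := by rw [← sq, ← hh, pow_orderOf_eq_one]
    exact_mod_cast congrArg (Subtype.val) this
  have hhinv : (h : G)⁻¹ = (h : G) := by
    rw [inv_eq_iff_mul_eq_one, hhsq]
  -- conjugation by h as a monoid hom on N
  let φ : N →* N := {
    toFun := fun n => ⟨(h : G) * n * (h : G)⁻¹, hNorm.conj_mem n n.2 h⟩
    map_one' := by ext; simp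
    map_mul' := fun a b => by ext; simp [mul_assoc] }
  have hinv : Function.Involutive φ := by
    intro n
    ext
    simp only [φ, MonoidHom.coe_mk, OneHom.coe_mk]
    rw [hhinv]
    group
    rw [hhsq, one_mul, mul_assoc, hhsq, mul_one]
  have hfree : MonoidHom.FixedPointFree φ := by
    intro n hn
    have := hfpf h h.2 hh1 n n.2 (congrArg Subtype.val hn)
    exact Subtype.ext this
  exact hfree.commute_all_of_involutive hinv
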